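/- Let 𝒜 be a measurement operator satisfying the rank-(4r+1) RIP with constant δ ≤ 1, let w ∈ ℝ^{n1}, v ∈ ℝ^{n2} be unit vectors with associated virtual operator 𝒜_{(w,v)}, and set c' := max{δ, 8√(2r(n1+n2)/m)}. Let X_t ∈ ℝ^{n1×n2} and X' ∈ ℝ^{n1×n2} both have rank r, and let X' have compact SVD X' = V'Σ'(W')ᵀ. Then ‖[(𝒜*_{(w,v)}𝒜_{(w,v)} − I)(X' − X_t)]·W'‖_F ≤ 2c'·‖X' − X_t‖_F and ‖(V')ᵀ·[(𝒜*_{(w,v)}𝒜_{(w,v)} − I)(X' − X_t)]‖_F ≤ 2c'·‖X' − X_t‖_F. -/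

import Mathlib

open Matrix MeasureTheory ProbabilityTheory
open scoped BigOperators

noncomputable section

/-- Frobenius inner product `⟨A, B⟩ = trace (Aᵀ * B)`. -/
def frobInner {n1 n2 : ℕ} (A B : Matrix (Fin n1) (Fin n2) ℝ) : ℝ :=
  Matrix.trace (Aᵀ * B)

/-- Frobenius norm of a matrix. -/
def frobNorm {n1 n2 : ℕ} (A : Matrix (Fin n1) (Fin n2) ℝ) : ℝ :=
  Real.sqrt (∑ i, ∑ j, A i j ^ 2)

/-- Spectral (ℓ²-operator) norm of a matrix. -/
def specNorm {n1 n2 : ℕ} (A : Matrix (Fin n1) (Fin n2) ℝ) : ℝ :=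
  ‖LinearMap.toContinuousLinearMap (Matrix.toEuclideanLin A)‖

/-- Euclidean norm of a vector in ℝ^m. -/
def vecNorm {m : ℕ} (v : Fin m → ℝ) : ℝ :=
  Real.sqrt (∑ i, v i ^ 2)

/-- Smallest nonzero singular value of a matrix: the singular values of `X` are the
square roots of the eigenvalues of `Xᴴ * X`. -/
def sigmaMin {n1 n2 : ℕ} (X : Matrix (Fin n1) (Fin n2) ℝ) : ℝ :=
  sInf {s : ℝ | 0 < s ∧ ∃ i : Fin n2,
    s ^ 2 = (Matrix.isHermitian_conjTranspose_mul_self X).eigenvalues i}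

/-- The measurement operator `𝒜(X) i = (1/√m) ⟨A i, X⟩`. -/
def measOp {n1 n2 m : ℕ} (A : Fin m → Matrix (Fin n1) (Fin n2) ℝ)
    (X : Matrix (Fin n1) (Fin n2) ℝ) : Fin m → ℝ :=
  fun i => (Real.sqrt m)⁻¹ * frobInner (A i) X

/-- The adjoint `𝒜*(u) = (1/√m) ∑ i, u i • A i`. -/
def measAdj {n1 n2 m : ℕ} (A : Fin m → Matrix (Fin n1) (Fin n2) ℝ)
    (u : Fin m → ℝ) : Matrix (Fin n1) (Fin n2) ℝ :=
  (Real.sqrt m)⁻¹ • ∑ i, u i • A i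

/-- The composite operator `𝒜*𝒜`. -/
def opAA {n1 n2 m : ℕ} (A : Fin m → Matrix (Fin n1) (Fin n2) ℝ)
    (X : Matrix (Fin n1) (Fin n2) ℝ) : Matrix (Fin n1) (Fin n2) ℝ :=
  measAdj A (measOp A X)

/-- Rank-`k` restricted isometry property with constant `δ`. -/
def HasRIP {n1 n2 m : ℕ} (A : Fin m → Matrix (Fin n1) (Fin n2) ℝ) (k : ℕ) (δ : ℝ) : Prop :=
  ∀ Z : Matrix (Fin n1) (Fin n2) ℝ, Z.rank ≤ k →
    (1 - δ) * frobNorm Z ^ 2 ≤ vecNorm (measOp A Z) ^ 2 ∧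
      vecNorm (measOp A Z) ^ 2 ≤ (1 + δ) * frobNorm Z ^ 2

/-- Compact SVD: `X = V * S * Wᵀ`, `V, W` with orthonormal columns, `S` diagonal with
positive diagonal entries. -/
def IsCompactSVD {n1 n2 r : ℕ} (X : Matrix (Fin n1) (Fin n2) ℝ)
    (V : Matrix (Fin n1) (Fin r) ℝ) (S : Matrix (Fin r) (Fin r) ℝ)
    (W : Matrix (Fin n2) (Fin r) ℝ) : Prop :=
  X = V * S * Wᵀ ∧ Vᵀ * V = 1 ∧ Wᵀ * W = 1 ∧
    (∀ i j, i ≠ j → S i j = 0) ∧ (∀ i, 0 < S i i)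

/-- `Vp` is a matrix whose columns form an orthonormal basis of the orthogonal
complement of the column space of `V` (which has orthonormal columns). -/
def IsOrthComplement {n r : ℕ} (V : Matrix (Fin n) (Fin r) ℝ)
    (Vp : Matrix (Fin n) (Fin (n - r)) ℝ) : Prop :=
  Vpᵀ * Vp = 1 ∧ Vᵀ * Vp = 0

end
noncomputable section

/-- Projection onto the direction `w vᵀ` : `𝒫_{wvᵀ}(Z) = ⟨wvᵀ, Z⟩ wvᵀ`. -/
def projWV {n1 n2 : ℕ} (w : Fin n1 → ℝ) (v : Fin n2 → ℝ)
    (Z : Matrix (Fin n1) (Fin n2) ℝ) : Matrix (Fin n1) (Fin n2) ℝ :=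
  frobInner (Matrix.vecMulVec w v) Z • Matrix.vecMulVec w v

/-- `𝒫_{wvᵀ,⊥}(Z) = Z − ⟨wvᵀ, Z⟩ wvᵀ`. -/
def projWVperp {n1 n2 : ℕ} (w : Fin n1 → ℝ) (v : Fin n2 → ℝ)
    (Z : Matrix (Fin n1) (Fin n2) ℝ) : Matrix (Fin n1) (Fin n2) ℝ :=
  Z - projWV w v Z

/-- The virtual measurement operator `𝒜_{(w,v)} : ℝ^{n1×n2} → ℝ^{m+1}`. -/
def virtOp {n1 n2 m : ℕ} (A : Fin m → Matrix (Fin n1) (Fin n2) ℝ)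
    (w : Fin n1 → ℝ) (v : Fin n2 → ℝ) (Z : Matrix (Fin n1) (Fin n2) ℝ) :
    Fin (m + 1) → ℝ :=
  fun i => if h : (i : ℕ) < m then
      (Real.sqrt m)⁻¹ * frobInner (projWVperp w v (A ⟨(i : ℕ), h⟩)) Z
    else frobInner (Matrix.vecMulVec w v) Z

/-- Adjoint of the virtual measurement operator. -/
def virtAdj {n1 n2 m : ℕ} (A : Fin m → Matrix (Fin n1) (Fin n2) ℝ)
    (w : Fin n1 → ℝ) (v : Fin n2 → ℝ) (u : Fin (m + 1) → ℝ) :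
    Matrix (Fin n1) (Fin n2) ℝ :=
  (Real.sqrt m)⁻¹ • (∑ i : Fin m, u i.castSucc • projWVperp w v (A i))
    + u (Fin.last m) • Matrix.vecMulVec w v

/-- The composite operator `𝒜*_{(w,v)} 𝒜_{(w,v)}`. -/
def virtAA {n1 n2 m : ℕ} (A : Fin m → Matrix (Fin n1) (Fin n2) ℝ)
    (w : Fin n1 → ℝ) (v : Fin n2 → ℝ) (Z : Matrix (Fin n1) (Fin n2) ℝ) :
    Matrix (Fin n1) (Fin n2) ℝ :=
  virtAdj A w v (virtOp A w v Z)

end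
section frob
variable {n1 n2 : ℕ} (A B C : Matrix (Fin n1) (Fin n2) ℝ)

lemma frobInner_eq_sum : frobInner A B = ∑ i, ∑ j, A i j * B i j := by
  simp [frobInner, Matrix.trace, Matrix.mul_apply, Matrix.diag]
  rw [Finset.sum_comm]

lemma frobInner_comm : frobInner A B = frobInner B A := by
  simp [frobInner_eq_sum, mul_comm]

lemma frobInner_add_right : frobInner A (B + C) = frobInner A B + frobInner A C := by
  simp [frobInner_eq_sum, mul_add, Finset.sum_add_distrib]

lemma frobInner_sub_right : frobInner A (B - C) = frobInner A B - frobInner A C := by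
  simp [frobInner_eq_sum, mul_sub, Finset.sum_sub_distrib]

lemma frobInner_smul_right (c : ℝ) : frobInner A (c • B) = c * frobInner A B := by
  simp only [frobInner_eq_sum, Matrix.smul_apply, smul_eq_mul, Finset.mul_sum]
  refine Finset.sum_congr rfl fun i _ => Finset.sum_congr rfl fun j _ => by ring

lemma frobInner_add_left : frobInner (A + B) C = frobInner A C + frobInner B C := by
  rw [frobInner_comm, frobInner_add_right, frobInner_comm C A, frobInner_comm C B]

lemma frobInner_sub_left : frobInner (A - B) C = frobInner A C - frobInner B C := by
  rw [frobInner_comm, frobInner_sub_right, frobInner_comm C A, frobInner_comm C B]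

lemma frobInner_smul_left (c : ℝ) : frobInner (c • A) B = c * frobInner A B := by
  rw [frobInner_comm, frobInner_smul_right, frobInner_comm]

lemma frobInner_zero_left : frobInner (0 : Matrix (Fin n1) (Fin n2) ℝ) C = 0 := by
  simp [frobInner_eq_sum]

lemma frobInner_sum_left {ι : Type*} (s : Finset ι) (f : ι → Matrix (Fin n1) (Fin n2) ℝ) :
    frobInner (∑ i ∈ s, f i) C = ∑ i ∈ s, frobInner (f i) C := by
  classical
  induction s using Finset.induction with
  | empty => simp [frobInner_zero_left]
  | insert _ _ h ih => rw [Finset.sum_insert h, frobInner_add_left, ih, Finset.sum_insert h]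

lemma frobInner_zero_right : frobInner A (0 : Matrix (Fin n1) (Fin n2) ℝ) = 0 := by
  simp [frobInner_eq_sum]

lemma frobInner_self_nonneg : 0 ≤ frobInner A A := by
  rw [frobInner_eq_sum]
  exact Finset.sum_nonneg fun i _ => Finset.sum_nonneg fun j _ => mul_self_nonneg _

lemma frobNorm_nonneg : 0 ≤ frobNorm A := Real.sqrt_nonneg _

lemma frobNorm_sq : frobNorm A ^ 2 = frobInner A A := by
  rw [frobNorm, Real.sq_sqrt, frobInner_eq_sum]
  · simp [sq]
  · exact Finset.sum_nonneg fun i _ => Finset.sum_nonneg fun j _ => sq_nonneg _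

lemma frobNorm_eq_sqrt : frobNorm A = Real.sqrt (frobInner A A) := by
  rw [← frobNorm_sq, Real.sqrt_sq (frobNorm_nonneg A)]

lemma frobNorm_eq_zero (h : frobNorm A = 0) : A = 0 := by
  have h2 := frobNorm_sq A
  rw [h] at h2
  rw [frobInner_eq_sum] at h2
  norm_num at h2
  ext i j
  have := (Finset.sum_eq_zero_iff_of_nonneg (fun i _ =>
    Finset.sum_nonneg fun j _ => mul_self_nonneg (A i j))).mp h2.symm i (Finset.mem_univ i)
  have := (Finset.sum_eq_zero_iff_of_nonneg (fun j _ =>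
    mul_self_nonneg (A i j))).mp this j (Finset.mem_univ j)
  simpa [mul_self_eq_zero] using this

lemma vecNorm_sq {m : ℕ} (u : Fin m → ℝ) : vecNorm u ^ 2 = ∑ i, u i ^ 2 :=
  Real.sq_sqrt (Finset.sum_nonneg fun i _ => sq_nonneg _)

end frob

section rankstuff
variable {n1 n2 : ℕ}

lemma matrank_add_le (A B : Matrix (Fin n1) (Fin n2) ℝ) :
    (A + B).rank ≤ A.rank + B.rank := by
  unfold Matrix.rank
  rw [Matrix.mulVecLin_add]
  have h : LinearMap.range (A.mulVecLin + B.mulVecLin) ≤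
      LinearMap.range A.mulVecLin ⊔ LinearMap.range B.mulVecLin := by
    rintro x ⟨y, rfl⟩
    exact Submodule.add_mem_sup ⟨y, rfl⟩ ⟨y, rfl⟩
  exact (Submodule.finrank_mono h).trans
    (Submodule.finrank_add_le_finrank_add_finrank _ _)

lemma matrank_smul_le (c : ℝ) (A : Matrix (Fin n1) (Fin n2) ℝ) :
    (c • A).rank ≤ A.rank := by
  unfold Matrix.rank
  have h : LinearMap.range (c • A).mulVecLin ≤ LinearMap.range A.mulVecLin := by
    rintro x ⟨y, rfl⟩
    refine ⟨c • y, ?_⟩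
    simp [Matrix.mulVecLin, Matrix.smul_mulVec, Matrix.mulVec_smul]
  exact Submodule.finrank_mono h

lemma matrank_vecMulVec_le (w : Fin n1 → ℝ) (v : Fin n2 → ℝ) :
    (Matrix.vecMulVec w v).rank ≤ 1 := by
  rw [Matrix.vecMulVec_eq (Fin 1)]
  exact (Matrix.rank_mul_le_left _ _).trans (Matrix.rank_le_card_width _)

lemma matrank_sub_le (A B : Matrix (Fin n1) (Fin n2) ℝ) :
    (A - B).rank ≤ A.rank + B.rank := by
  have : A - B = A + (-1 : ℝ) • B := by ext i j; simp; ring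
  rw [this]
  exact (matrank_add_le _ _).trans (by
    have := matrank_smul_le (-1 : ℝ) B
    omega)

end rankstuff

section virt
variable {n1 n2 m : ℕ} (A : Fin m → Matrix (Fin n1) (Fin n2) ℝ)
  (w : Fin n1 → ℝ) (v : Fin n2 → ℝ)

lemma virtOp_castSucc (Z : Matrix (Fin n1) (Fin n2) ℝ) (i : Fin m) :
    virtOp A w v Z i.castSucc
      = (Real.sqrt m)⁻¹ * frobInner (projWVperp w v (A i)) Z := by
  have h : ((i.castSucc : Fin (m+1)) : ℕ) < m := by simpa using i.isLt
  rw [virtOp, dif_pos h]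
  rfl

lemma virtOp_last (Z : Matrix (Fin n1) (Fin n2) ℝ) :
    virtOp A w v Z (Fin.last m) = frobInner (Matrix.vecMulVec w v) Z := by
  rw [virtOp, dif_neg (by simp)]

/-- Parseval-type identity for the virtual operator. -/
lemma virt_parseval (Z Y : Matrix (Fin n1) (Fin n2) ℝ) :
    frobInner (virtAA A w v Z) Y = ∑ j : Fin (m + 1), virtOp A w v Z j * virtOp A w v Y j := by
  rw [virtAA, virtAdj, frobInner_add_left, frobInner_smul_left, frobInner_sum_left,
    Fin.sum_univ_castSucc, frobInner_smul_left, virtOp_last, Finset.mul_sum]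
  congr 1
  · refine Finset.sum_congr rfl fun i _ => ?_
    rw [frobInner_smul_left, virtOp_castSucc, virtOp_castSucc]
    ring
  · rw [virtOp_last]

lemma virtOp_linear (a b : ℝ) (Y₁ Y₂ : Matrix (Fin n1) (Fin n2) ℝ) (j : Fin (m + 1)) :
    virtOp A w v (a • Y₁ + b • Y₂) j
      = a * virtOp A w v Y₁ j + b * virtOp A w v Y₂ j := by
  induction j using Fin.lastCases with
  | last => rw [virtOp_last, virtOp_last, virtOp_last, frobInner_add_right,
      frobInner_smul_right, frobInner_smul_right]
  | cast i =>
    rw [virtOp_castSucc, virtOp_castSucc, virtOp_castSucc, frobInner_add_right,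
      frobInner_smul_right, frobInner_smul_right]
    ring

lemma projWVperp_selfadjoint (B Z : Matrix (Fin n1) (Fin n2) ℝ) :
    frobInner (projWVperp w v B) Z = frobInner B (projWVperp w v Z) := by
  rw [projWVperp, projWVperp, projWV, projWV, frobInner_sub_left, frobInner_sub_right,
    frobInner_smul_left, frobInner_smul_right]
  rw [frobInner_comm (Matrix.vecMulVec w v) B, frobInner_comm B (Matrix.vecMulVec w v)]
  ring

lemma matrank_projWVperp_le (Z : Matrix (Fin n1) (Fin n2) ℝ) :
    (projWVperp w v Z).rank ≤ Z.rank + 1 := by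
  rw [projWVperp, projWV]
  exact (matrank_sub_le _ _).trans (by
    have := (matrank_smul_le (frobInner (Matrix.vecMulVec w v) Z) (Matrix.vecMulVec w v)).trans
      (matrank_vecMulVec_le w v)
    omega)

lemma frobInner_vecMulVec_self (hw : vecNorm w = 1) (hv : vecNorm v = 1) :
    frobInner (Matrix.vecMulVec w v) (Matrix.vecMulVec w v) = 1 := by
  have hw2 : ∑ i, w i ^ 2 = 1 := by
    have := vecNorm_sq w; rw [hw] at this; linarith [this.symm]
  have hv2 : ∑ j, v j ^ 2 = 1 := by
    have := vecNorm_sq v; rw [hv] at this; linarith [this.symm]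
  rw [frobInner_eq_sum]
  have : ∀ i : Fin n1, ∑ j, Matrix.vecMulVec w v i j * Matrix.vecMulVec w v i j
      = w i ^ 2 * ∑ j, v j ^ 2 := by
    intro i
    rw [Finset.mul_sum]
    exact Finset.sum_congr rfl fun j _ => by simp [Matrix.vecMulVec_apply]; ring
  rw [Finset.sum_congr rfl fun i _ => this i]
  rw [← Finset.sum_mul, hw2, hv2, one_mul]

/-- Pythagoras: `‖Z‖² = ‖P⊥Z‖² + ⟨G,Z⟩²`. -/
lemma projWVperp_pythagoras (hw : vecNorm w = 1) (hv : vecNorm v = 1)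
    (Z : Matrix (Fin n1) (Fin n2) ℝ) :
    frobInner Z Z = frobInner (projWVperp w v Z) (projWVperp w v Z)
      + frobInner (Matrix.vecMulVec w v) Z ^ 2 := by
  rw [projWVperp, projWV, frobInner_sub_left, frobInner_sub_right, frobInner_sub_right,
    frobInner_smul_left, frobInner_smul_right, frobInner_smul_right,
    frobInner_smul_left, frobInner_vecMulVec_self w v hw hv,
    frobInner_comm Z (Matrix.vecMulVec w v)]
  ring

end virt


section key
variable {n1 n2 m r : ℕ}

lemma virtOp_zero (A : Fin m → Matrix (Fin n1) (Fin n2) ℝ) (w : Fin n1 → ℝ) (v : Fin n2 → ℝ)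
    (j : Fin (m + 1)) : virtOp A w v (0 : Matrix (Fin n1) (Fin n2) ℝ) j = 0 := by
  unfold virtOp
  split <;> simp [frobInner_zero_right]

/-- RIP for the virtual operator. -/
lemma virt_rip (A : Fin m → Matrix (Fin n1) (Fin n2) ℝ) (δ : ℝ) (hδ : 0 ≤ δ)
    (hRIP : HasRIP A (4 * r + 1) δ) (w : Fin n1 → ℝ) (v : Fin n2 → ℝ)
    (hw : vecNorm w = 1) (hv : vecNorm v = 1)
    (Y : Matrix (Fin n1) (Fin n2) ℝ) (hY : Y.rank ≤ 4 * r) :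
    (1 - δ) * frobInner Y Y ≤ ∑ j : Fin (m + 1), virtOp A w v Y j ^ 2 ∧
      ∑ j : Fin (m + 1), virtOp A w v Y j ^ 2 ≤ (1 + δ) * frobInner Y Y := by
  set PY := projWVperp w v Y with hPY
  set c := frobInner (Matrix.vecMulVec w v) Y with hc
  have hsum : ∑ j : Fin (m + 1), virtOp A w v Y j ^ 2
      = vecNorm (measOp A PY) ^ 2 + c ^ 2 := by
    rw [Fin.sum_univ_castSucc, virtOp_last, vecNorm_sq]
    congr 1
    refine Finset.sum_congr rfl fun i _ => ?_
    rw [virtOp_castSucc, measOp, projWVperp_selfadjoint]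
  have hrank : PY.rank ≤ 4 * r + 1 := (matrank_projWVperp_le w v Y).trans (by omega)
  have hrip := hRIP PY hrank
  have hpyth := projWVperp_pythagoras w v hw hv Y
  have hfn : frobNorm PY ^ 2 = frobInner PY PY := frobNorm_sq PY
  have hnn : 0 ≤ frobInner PY PY := frobInner_self_nonneg PY
  rw [hfn] at hrip
  constructor
  · rw [hsum, hpyth]
    nlinarith [sq_nonneg c, hrip.1]
  · rw [hsum, hpyth]
    nlinarith [sq_nonneg c, hrip.2]

/-- Key cross-term estimate for the virtual operator. -/
lemma virt_key (A : Fin m → Matrix (Fin n1) (Fin n2) ℝ) (δ : ℝ) (hδ : 0 ≤ δ)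
    (hRIP : HasRIP A (4 * r + 1) δ) (w : Fin n1 → ℝ) (v : Fin n2 → ℝ)
    (hw : vecNorm w = 1) (hv : vecNorm v = 1)
    (Z Q : Matrix (Fin n1) (Fin n2) ℝ) (hZQ : Z.rank + Q.rank ≤ 4 * r) :
    frobInner (virtAA A w v Z - Z) Q ≤ δ * (frobNorm Z * frobNorm Q) := by
  rw [frobInner_sub_left, virt_parseval]
  set a := frobNorm Z with ha
  set b := frobNorm Q with hb
  rcases eq_or_lt_of_le (frobNorm_nonneg Z) with ha0 | ha0
  · have hZ0 : Z = 0 := frobNorm_eq_zero Z ha0.symm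
    subst hZ0
    simp [virtOp_zero, frobInner_zero_left]
    exact mul_nonneg hδ (mul_nonneg (frobNorm_nonneg _) (frobNorm_nonneg _))
  rcases eq_or_lt_of_le (frobNorm_nonneg Q) with hb0 | hb0
  · have hQ0 : Q = 0 := frobNorm_eq_zero Q hb0.symm
    subst hQ0
    simp [frobInner_zero_right]
    refine le_trans (le_of_eq ?_) (by positivity)
    exact Finset.sum_eq_zero fun j _ => by rw [virtOp_zero, mul_zero]
  set R1 := b • Z + a • Q with hR1
  set R2 := b • Z + (-a) • Q with hR2
  have hr1 : R1.rank ≤ 4 * r := by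
    refine (matrank_add_le _ _).trans (le_trans ?_ hZQ)
    exact add_le_add (matrank_smul_le _ _) (matrank_smul_le _ _)
  have hr2 : R2.rank ≤ 4 * r := by
    refine (matrank_add_le _ _).trans (le_trans ?_ hZQ)
    exact add_le_add (matrank_smul_le _ _) (matrank_smul_le _ _)
  have h1 := (virt_rip A δ hδ hRIP w v hw hv R1 hr1).2
  have h2 := (virt_rip A δ hδ hRIP w v hw hv R2 hr2).1
  have hZZ : frobInner Z Z = a ^ 2 := (frobNorm_sq Z).symm
  have hQQ : frobInner Q Q = b ^ 2 := (frobNorm_sq Q).symm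
  set ip := frobInner Z Q with hip
  have hQZ : frobInner Q Z = ip := frobInner_comm Q Z
  have hn1 : frobInner R1 R1 = a ^ 2 * b ^ 2 + 2 * a * b * ip + a ^ 2 * b ^ 2 := by
    rw [hR1]
    simp only [frobInner_add_left, frobInner_add_right, frobInner_smul_left,
      frobInner_smul_right, hZZ, hQQ, hQZ, ← hip]
    ring
  have hn2 : frobInner R2 R2 = a ^ 2 * b ^ 2 - 2 * a * b * ip + a ^ 2 * b ^ 2 := by
    rw [hR2]
    simp only [frobInner_add_left, frobInner_add_right, frobInner_smul_left,
      frobInner_smul_right, hZZ, hQQ, hQZ, ← hip]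
    ring
  set C := ∑ j : Fin (m + 1), virtOp A w v Z j * virtOp A w v Q j with hC
  have hdiff : (∑ j : Fin (m + 1), virtOp A w v R1 j ^ 2)
      - (∑ j : Fin (m + 1), virtOp A w v R2 j ^ 2) = 4 * a * b * C := by
    rw [← Finset.sum_sub_distrib, hC, Finset.mul_sum]
    refine Finset.sum_congr rfl fun j _ => ?_
    rw [hR1, hR2, virtOp_linear, virtOp_linear]
    ring
  rw [hn1] at h1
  rw [hn2] at h2
  nlinarith [mul_pos ha0 hb0, h1, h2, hdiff]

end key

/-- Virtual-operator RIP-type bound: for rank-`r` matrices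
`X_t, X'` with `X' = V'Σ'(W')ᵀ`,
`‖[(𝒜*_{(w,v)}𝒜_{(w,v)} − I)(X' − X_t)] W'‖_F ≤ 2c'‖X' − X_t‖_F` and the analogous
bound with `(V')ᵀ` on the left. -/
theorem statement14 {n1 n2 m r : ℕ}
    (A : Fin m → Matrix (Fin n1) (Fin n2) ℝ) (δ c' : ℝ)
    (hδ0 : 0 < δ) (hδ1 : δ ≤ 1) (hRIP : HasRIP A (4 * r + 1) δ)
    (w : Fin n1 → ℝ) (v : Fin n2 → ℝ) (hw : vecNorm w = 1) (hv : vecNorm v = 1)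
    (hc' : c' = max δ (8 * Real.sqrt (2 * (r : ℝ) * ((n1 : ℝ) + n2) / m)))
    (Xt X' : Matrix (Fin n1) (Fin n2) ℝ) (hXt : Xt.rank = r)
    (V' : Matrix (Fin n1) (Fin r) ℝ) (S' : Matrix (Fin r) (Fin r) ℝ)
    (W' : Matrix (Fin n2) (Fin r) ℝ) (hX' : IsCompactSVD X' V' S' W') :
    frobNorm ((virtAA A w v (X' - Xt) - (X' - Xt)) * W') ≤ 2 * c' * frobNorm (X' - Xt) ∧
    frobNorm (V'ᵀ * (virtAA A w v (X' - Xt) - (X' - Xt))) ≤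
      2 * c' * frobNorm (X' - Xt) := by
  set Z := X' - Xt with hZ
  set M := virtAA A w v Z - Z with hM
  have hδ : (0:ℝ) ≤ δ := le_of_lt hδ0
  have hδc : δ ≤ c' := hc' ▸ le_max_left _ _
  have hc'0 : 0 < c' := lt_of_lt_of_le hδ0 hδc
  have hzn : (0:ℝ) ≤ frobNorm Z := frobNorm_nonneg Z
  have hrX' : X'.rank ≤ r := by
    rw [hX'.1]
    exact (Matrix.rank_mul_le_left _ _).trans ((Matrix.rank_mul_le_left _ _).trans
      (by simpa using Matrix.rank_le_card_width V'))
  have hrZ : Z.rank ≤ 2 * r := by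
    rw [hZ]
    refine (matrank_sub_le _ _).trans ?_
    rw [hXt]
    omega
  have main : ∀ (p q : ℕ) (K : Matrix (Fin p) (Fin q) ℝ)
      (Q : Matrix (Fin n1) (Fin n2) ℝ), Q.rank ≤ r →
      frobInner M Q = frobInner K K → frobInner Q Q = frobInner K K →
      frobNorm K ≤ 2 * c' * frobNorm Z := by
    intro p q K Q hrQ hMQ hQQ
    have hZQ : Z.rank + Q.rank ≤ 4 * r := by omega
    have hkey := virt_key A δ hδ hRIP w v hw hv Z Q hZQ
    rw [← hM, hMQ] at hkey
    have hQK : frobNorm Q = frobNorm K := by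
      rw [frobNorm_eq_sqrt, frobNorm_eq_sqrt, hQQ]
    rw [hQK] at hkey
    have hKK : frobInner K K = frobNorm K ^ 2 := (frobNorm_sq K).symm
    rw [hKK] at hkey
    have hkn : (0:ℝ) ≤ frobNorm K := frobNorm_nonneg K
    rcases eq_or_lt_of_le hkn with hk0 | hk0
    · rw [← hk0]
      positivity
    · have h1 : frobNorm K * frobNorm K ≤ (δ * frobNorm Z) * frobNorm K := by nlinarith [hkey]
      have h2 := le_of_mul_le_mul_right h1 hk0
      have h3 := mul_le_mul_of_nonneg_right hδc hzn
      have h4 : 0 ≤ c' * frobNorm Z := mul_nonneg (le_of_lt hc'0) hzn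
      linarith
  have hWW : W'ᵀ * W' = 1 := hX'.2.2.1
  have hVV : V'ᵀ * V' = 1 := hX'.2.1
  constructor
  · refine main _ _ (M * W') (M * W' * W'ᵀ) ?_ ?_ ?_
    · exact (Matrix.rank_mul_le_right _ _).trans
        (by simpa using Matrix.rank_le_card_height W'ᵀ)
    · show Matrix.trace (Mᵀ * (M * W' * W'ᵀ)) = Matrix.trace ((M * W')ᵀ * (M * W'))
      rw [← Matrix.mul_assoc, Matrix.trace_mul_comm, Matrix.transpose_mul, Matrix.mul_assoc]
    · show Matrix.trace ((M * W' * W'ᵀ)ᵀ * (M * W' * W'ᵀ))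
        = Matrix.trace ((M * W')ᵀ * (M * W'))
      rw [Matrix.transpose_mul, Matrix.mul_assoc, Matrix.trace_mul_comm,
        Matrix.mul_assoc, Matrix.mul_assoc, Matrix.transpose_transpose, hWW, Matrix.mul_one]
  · refine main _ _ (V'ᵀ * M) (V' * (V'ᵀ * M)) ?_ ?_ ?_
    · exact (Matrix.rank_mul_le_left _ _).trans
        (by simpa using Matrix.rank_le_card_width V')
    · show Matrix.trace (Mᵀ * (V' * (V'ᵀ * M))) = Matrix.trace ((V'ᵀ * M)ᵀ * (V'ᵀ * M))
      rw [Matrix.transpose_mul, Matrix.transpose_transpose, Matrix.mul_assoc]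
    · show Matrix.trace ((V' * (V'ᵀ * M))ᵀ * (V' * (V'ᵀ * M)))
        = Matrix.trace ((V'ᵀ * M)ᵀ * (V'ᵀ * M))
      rw [Matrix.transpose_mul, Matrix.mul_assoc, ← Matrix.mul_assoc V'ᵀ V' (V'ᵀ * M),
        hVV, Matrix.one_mul]
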